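/- For the Toda-type Hamiltonian H = ½(p₁²+p₂²+p₃²) + e^{q₁+q₂} + e^{−q₂+q₃} + e^{−q₂−q₃} + e^{−q₁+q₂} on ℝ⁶, the function I = p₁p₂p₃ − p₃(e^{−q₁+q₂} − e^{q₁+q₂}) − p₁(e^{−q₂+q₃} − e^{−q₂−q₃}) Poisson-commutes with H. -/

import Mathlib

noncomputable def H₁₁ (q₁ q₂ q₃ p₁ p₂ p₃ : ℝ) : ℝ :=
  (p₁ ^ 2 + p₂ ^ 2 + p₃ ^ 2) / 2 + Real.exp (q₁ + q₂) + Real.exp (-q₂ + q₃) +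
    Real.exp (-q₂ - q₃) + Real.exp (-q₁ + q₂)

noncomputable def I₁₁ (q₁ q₂ q₃ p₁ p₂ p₃ : ℝ) : ℝ :=
  p₁ * p₂ * p₃ - p₃ * (Real.exp (-q₁ + q₂) - Real.exp (q₁ + q₂)) -
    p₁ * (Real.exp (-q₂ + q₃) - Real.exp (-q₂ - q₃))

/-- Poisson bracket of two functions on ℝ⁶ with coordinates (q₁,q₂,q₃,p₁,p₂,p₃). -/
noncomputable def pb6 (F G : ℝ → ℝ → ℝ → ℝ → ℝ → ℝ → ℝ) (q₁ q₂ q₃ p₁ p₂ p₃ : ℝ) : ℝ :=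
  (deriv (fun x => F x q₂ q₃ p₁ p₂ p₃) q₁) * (deriv (fun x => G q₁ q₂ q₃ x p₂ p₃) p₁) -
  (deriv (fun x => F q₁ q₂ q₃ x p₂ p₃) p₁) * (deriv (fun x => G x q₂ q₃ p₁ p₂ p₃) q₁) +
  (deriv (fun x => F q₁ x q₃ p₁ p₂ p₃) q₂) * (deriv (fun x => G q₁ q₂ q₃ p₁ x p₃) p₂) -
  (deriv (fun x => F q₁ q₂ q₃ p₁ x p₃) p₂) * (deriv (fun x => G q₁ x q₃ p₁ p₂ p₃) q₂) +
  (deriv (fun x => F q₁ q₂ x p₁ p₂ p₃) q₃) * (deriv (fun x => G q₁ q₂ q₃ p₁ p₂ x) p₃) -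
  (deriv (fun x => F q₁ q₂ q₃ p₁ p₂ x) p₃) * (deriv (fun x => G q₁ q₂ x p₁ p₂ p₃) q₃)

private lemma expA (c x : ℝ) : HasDerivAt (fun t : ℝ => Real.exp (t + c)) (Real.exp (x + c)) x := by
  simpa [Function.comp_def] using (Real.hasDerivAt_exp (x + c)).comp x ((hasDerivAt_id x).add_const c)
private lemma expB (c x : ℝ) : HasDerivAt (fun t : ℝ => Real.exp (-t + c)) (-Real.exp (-x + c)) x := by
  have h : HasDerivAt (fun t : ℝ => -t + c) (-1) x := by
    simpa using ((hasDerivAt_id x).neg.add_const c)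
  simpa [mul_comm, Function.comp_def] using (Real.hasDerivAt_exp (-x + c)).comp x h
private lemma expB' (c x : ℝ) : HasDerivAt (fun t : ℝ => Real.exp (-t - c)) (-Real.exp (-x - c)) x := by
  have h : HasDerivAt (fun t : ℝ => -t - c) (-1) x := by
    simpa using ((hasDerivAt_id x).neg.sub_const c)
  simpa [mul_comm, Function.comp_def] using (Real.hasDerivAt_exp (-x - c)).comp x h
private lemma expC (c x : ℝ) : HasDerivAt (fun t : ℝ => Real.exp (c + t)) (Real.exp (c + x)) x := by
  simpa [Function.comp_def] using (Real.hasDerivAt_exp (c + x)).comp x ((hasDerivAt_id x).const_add c)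
private lemma expD (c x : ℝ) : HasDerivAt (fun t : ℝ => Real.exp (c - t)) (-Real.exp (c - x)) x := by
  have h : HasDerivAt (fun t : ℝ => c - t) (-1) x := by
    simpa using (hasDerivAt_id x).const_sub c
  simpa [mul_comm, Function.comp_def] using (Real.hasDerivAt_exp (c - x)).comp x h

theorem stmt_11 (q₁ q₂ q₃ p₁ p₂ p₃ : ℝ) : pb6 H₁₁ I₁₁ q₁ q₂ q₃ p₁ p₂ p₃ = 0 := by
  have hHq1 : deriv (fun x => H₁₁ x q₂ q₃ p₁ p₂ p₃) q₁
      = Real.exp (q₁ + q₂) - Real.exp (-q₁ + q₂) := by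
    have h : HasDerivAt (fun x => H₁₁ x q₂ q₃ p₁ p₂ p₃)
        (0 + Real.exp (q₁ + q₂) + -Real.exp (-q₁ + q₂)) q₁ := by
      unfold H₁₁
      exact ((((hasDerivAt_const q₁ ((p₁^2+p₂^2+p₃^2)/2)).add (expA q₂ q₁)).add_const
        (Real.exp (-q₂+q₃))).add_const (Real.exp (-q₂-q₃))).add (expB q₂ q₁)
    rw [h.deriv]; ring
  have hHq2 : deriv (fun x => H₁₁ q₁ x q₃ p₁ p₂ p₃) q₂
      = Real.exp (q₁ + q₂) - Real.exp (-q₂ + q₃) - Real.exp (-q₂ - q₃) + Real.exp (-q₁ + q₂) := by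
    have h : HasDerivAt (fun x => H₁₁ q₁ x q₃ p₁ p₂ p₃)
        (0 + Real.exp (q₁ + q₂) + -Real.exp (-q₂ + q₃) + -Real.exp (-q₂ - q₃) + Real.exp (-q₁ + q₂)) q₂ := by
      unfold H₁₁
      exact ((((hasDerivAt_const q₂ ((p₁^2+p₂^2+p₃^2)/2)).add (expC q₁ q₂)).add
        (expB q₃ q₂)).add (expB' q₃ q₂)).add (expC (-q₁) q₂)
    rw [h.deriv]; ring
  have hHq3 : deriv (fun x => H₁₁ q₁ q₂ x p₁ p₂ p₃) q₃
      = Real.exp (-q₂ + q₃) - Real.exp (-q₂ - q₃) := by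
    have h : HasDerivAt (fun x => H₁₁ q₁ q₂ x p₁ p₂ p₃)
        (Real.exp (-q₂ + q₃) + -Real.exp (-q₂ - q₃)) q₃ := by
      unfold H₁₁
      exact (((expC (-q₂) q₃).const_add ((p₁^2+p₂^2+p₃^2)/2 + Real.exp (q₁+q₂))).add
        (expD (-q₂) q₃)).add_const (Real.exp (-q₁+q₂))
    rw [h.deriv]; ring
  have hHp1 : deriv (fun x => H₁₁ q₁ q₂ q₃ x p₂ p₃) p₁ = p₁ := by
    have h : HasDerivAt (fun x => H₁₁ q₁ q₂ q₃ x p₂ p₃) ((2:ℕ) * p₁ ^ (2-1) / 2) p₁ := by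
      unfold H₁₁
      exact ((((((((hasDerivAt_pow 2 p₁).add_const (p₂^2)).add_const (p₃^2)).div_const 2).add_const
        (Real.exp (q₁+q₂))).add_const (Real.exp (-q₂+q₃))).add_const
        (Real.exp (-q₂-q₃))).add_const (Real.exp (-q₁+q₂)))
    rw [h.deriv]; norm_num
  have hHp2 : deriv (fun x => H₁₁ q₁ q₂ q₃ p₁ x p₃) p₂ = p₂ := by
    have h : HasDerivAt (fun x => H₁₁ q₁ q₂ q₃ p₁ x p₃) ((2:ℕ) * p₂ ^ (2-1) / 2) p₂ := by
      unfold H₁₁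
      exact ((((((((hasDerivAt_pow 2 p₂).const_add (p₁^2)).add_const (p₃^2)).div_const 2).add_const
        (Real.exp (q₁+q₂))).add_const (Real.exp (-q₂+q₃))).add_const
        (Real.exp (-q₂-q₃))).add_const (Real.exp (-q₁+q₂)))
    rw [h.deriv]; norm_num
  have hHp3 : deriv (fun x => H₁₁ q₁ q₂ q₃ p₁ p₂ x) p₃ = p₃ := by
    have h : HasDerivAt (fun x => H₁₁ q₁ q₂ q₃ p₁ p₂ x) ((2:ℕ) * p₃ ^ (2-1) / 2) p₃ := by
      unfold H₁₁
      exact (((((((hasDerivAt_pow 2 p₃).const_add (p₁^2 + p₂^2)).div_const 2).add_const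
        (Real.exp (q₁+q₂))).add_const (Real.exp (-q₂+q₃))).add_const
        (Real.exp (-q₂-q₃))).add_const (Real.exp (-q₁+q₂)))
    rw [h.deriv]; norm_num
  have hIq1 : deriv (fun x => I₁₁ x q₂ q₃ p₁ p₂ p₃) q₁
      = p₃ * (Real.exp (-q₁ + q₂) + Real.exp (q₁ + q₂)) := by
    have h : HasDerivAt (fun x => I₁₁ x q₂ q₃ p₁ p₂ p₃)
        (-(p₃ * (-Real.exp (-q₁ + q₂) - Real.exp (q₁ + q₂)))) q₁ := by
      unfold I₁₁
      exact ((((expB q₂ q₁).sub (expA q₂ q₁)).const_mul p₃).const_sub (p₁*p₂*p₃)).sub_const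
        (p₁ * (Real.exp (-q₂+q₃) - Real.exp (-q₂-q₃)))
    rw [h.deriv]; ring
  have hIq2 : deriv (fun x => I₁₁ q₁ x q₃ p₁ p₂ p₃) q₂
      = -p₃ * (Real.exp (-q₁ + q₂) - Real.exp (q₁ + q₂))
        + p₁ * (Real.exp (-q₂ + q₃) - Real.exp (-q₂ - q₃)) := by
    have h : HasDerivAt (fun x => I₁₁ q₁ x q₃ p₁ p₂ p₃)
        (-(p₃ * (Real.exp (-q₁ + q₂) - Real.exp (q₁ + q₂)))
          - p₁ * (-Real.exp (-q₂ + q₃) - -Real.exp (-q₂ - q₃))) q₂ := by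
      unfold I₁₁
      exact (((((expC (-q₁) q₂).sub (expC q₁ q₂)).const_mul p₃).const_sub (p₁*p₂*p₃)).sub
        (((expB q₃ q₂).sub (expB' q₃ q₂)).const_mul p₁))
    rw [h.deriv]; ring
  have hIq3 : deriv (fun x => I₁₁ q₁ q₂ x p₁ p₂ p₃) q₃
      = -p₁ * (Real.exp (-q₂ + q₃) + Real.exp (-q₂ - q₃)) := by
    have h : HasDerivAt (fun x => I₁₁ q₁ q₂ x p₁ p₂ p₃)
        (-(p₁ * (Real.exp (-q₂ + q₃) - -Real.exp (-q₂ - q₃)))) q₃ := by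
      unfold I₁₁
      exact (((expC (-q₂) q₃).sub (expD (-q₂) q₃)).const_mul p₁).const_sub
        (p₁*p₂*p₃ - p₃ * (Real.exp (-q₁+q₂) - Real.exp (q₁+q₂)))
    rw [h.deriv]; ring
  have hIp1 : deriv (fun x => I₁₁ q₁ q₂ q₃ x p₂ p₃) p₁
      = p₂ * p₃ - (Real.exp (-q₂ + q₃) - Real.exp (-q₂ - q₃)) := by
    have h : HasDerivAt (fun x => I₁₁ q₁ q₂ q₃ x p₂ p₃)
        (1 * p₂ * p₃ - 1 * (Real.exp (-q₂ + q₃) - Real.exp (-q₂ - q₃))) p₁ := by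
      unfold I₁₁
      exact ((((hasDerivAt_id p₁).mul_const p₂).mul_const p₃).sub_const
        (p₃ * (Real.exp (-q₁+q₂) - Real.exp (q₁+q₂)))).sub
        ((hasDerivAt_id p₁).mul_const (Real.exp (-q₂+q₃) - Real.exp (-q₂-q₃)))
    rw [h.deriv]; ring
  have hIp2 : deriv (fun x => I₁₁ q₁ q₂ q₃ p₁ x p₃) p₂ = p₁ * p₃ := by
    have h : HasDerivAt (fun x => I₁₁ q₁ q₂ q₃ p₁ x p₃) (p₁ * 1 * p₃) p₂ := by
      unfold I₁₁
      exact ((((hasDerivAt_id p₂).const_mul p₁).mul_const p₃).sub_const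
        (p₃ * (Real.exp (-q₁+q₂) - Real.exp (q₁+q₂)))).sub_const
        (p₁ * (Real.exp (-q₂+q₃) - Real.exp (-q₂-q₃)))
    rw [h.deriv]; ring
  have hIp3 : deriv (fun x => I₁₁ q₁ q₂ q₃ p₁ p₂ x) p₃
      = p₁ * p₂ - (Real.exp (-q₁ + q₂) - Real.exp (q₁ + q₂)) := by
    have h : HasDerivAt (fun x => I₁₁ q₁ q₂ q₃ p₁ p₂ x)
        (p₁ * p₂ * 1 - 1 * (Real.exp (-q₁ + q₂) - Real.exp (q₁ + q₂))) p₃ := by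
      unfold I₁₁
      exact (((hasDerivAt_id p₃).const_mul (p₁*p₂)).sub
        ((hasDerivAt_id p₃).mul_const (Real.exp (-q₁+q₂) - Real.exp (q₁+q₂)))).sub_const
        (p₁ * (Real.exp (-q₂+q₃) - Real.exp (-q₂-q₃)))
    rw [h.deriv]; ring
  unfold pb6
  rw [hHq1, hHq2, hHq3, hHp1, hHp2, hHp3, hIq1, hIq2, hIq3, hIp1, hIp2, hIp3]
  ring
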